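/- Let n ≥ 1, let 0 ≤ k ≤ n−1, and set l := max{k, n−k−1}. For every i with 0 ≤ i ≤ l, the i-lexical matching M^i_{n,k} saturates every vertex in the smaller of the two levels k and k+1 of Q_n: if the binomial coefficient C(n,k) ≤ C(n,k+1), then every vertex of level k is incident to an edge of M^i_{n,k}, and if C(n,k+1) ≤ C(n,k), then every vertex of level k+1 is incident to an edge of M^i_{n,k}. -/

import Mathlib

/-- The Hamming weight of a bitstring of length `n`, i.e., its number of 1-bits. -/
def wt {n : ℕ} (x : Fin n → Bool) : ℕ := (Finset.univ.filter fun i => x i = true).card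

/-- The `n`-dimensional hypercube: vertices are bitstrings of length `n`, two of which are
adjacent iff they differ in exactly one position. -/
def cube (n : ℕ) : SimpleGraph (Fin n → Bool) where
  Adj x y := hammingDist x y = 1
  symm := by
    constructor; intro x y (h : hammingDist x y = 1)
    show hammingDist y x = 1; rwa [hammingDist_comm]
  loopless := by
    constructor; intro x (h : hammingDist x x = 1); simp [hammingDist_self] at h
/-- The number of 1-bits among the first `j` bits of `x` (interpreting a bitstring as a
lattice path, this determines the height after `j` steps). -/
def onesUpTo {n : ℕ} (x : Fin n → Bool) (j : ℕ) : ℕ :=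
  (Finset.univ.filter fun i : Fin n => i.val < j ∧ x i = true).card

/-- The height of the lattice path of `x` after `j` steps: number of 1s minus number of 0s
among the first `j` bits (appended steps beyond the length of `x` being down-steps). -/
def hgt {n : ℕ} (x : Fin n → Bool) (j : ℕ) : ℤ := 2 * (onesUpTo x j : ℤ) - (j : ℤ)

/-- The length of the extended lattice path `x^↑`: if the final height `2·wt x − n` is `≥ −1`,
down-steps are appended until the path ends at height `−1` (total length `2·wt x + 1`);
otherwise nothing is appended. -/
def extLen {n : ℕ} (x : Fin n → Bool) : ℕ := max n (2 * wt x + 1)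

/-- Position `j` (0-indexed) of the extended path `x^↑` is a down-step: either it is a 0-bit
of `x`, or one of the appended down-steps. -/
def isDownStep {n : ℕ} (x : Fin n → Bool) (j : ℕ) : Prop :=
  j < extLen x ∧ ∀ h : j < n, x ⟨j, h⟩ = false

/-- The `i`-lexical matching `M^i_{n,k}` between levels `k` and `k+1` of the `n`-cube, as a
relation: `lexUp n k i x y` holds iff `x` lies in level `k` and `y = M^{i,↑}_{n,k}(x)`, i.e.,
`y` is obtained from `x` by flipping to 1 the 0-bit at the `i`-th down-step of `x^↑` in the
order of decreasing starting height, ties broken from right to left, counting from 0,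
provided this down-step lies within `x`. -/
def lexUp (n k i : ℕ) (x y : Fin n → Bool) : Prop :=
  wt x = k ∧ ∃ d : ℕ, d < n ∧ isDownStep x d ∧
    ({j : ℕ | isDownStep x j ∧ (hgt x d < hgt x j ∨ (hgt x j = hgt x d ∧ d < j))}).ncard = i ∧
    y = fun t : Fin n => if t.val = d then true else x t
section LexAux

open Finset
open scoped Classical

variable {n : ℕ}

/-- Position `j` is an up-step of `x` (within `x`). -/
def upAt (x : Fin n → Bool) (j : ℕ) : Prop := ∃ hj : j < n, x ⟨j, hj⟩ = true

lemma isDownStep_iff (x : Fin n → Bool) (j : ℕ) :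
    isDownStep x j ↔ j < extLen x ∧ ¬ upAt x j := by
  unfold isDownStep upAt
  constructor
  · rintro ⟨h1, h2⟩
    exact ⟨h1, fun ⟨hj, hx⟩ => by simp [h2 hj] at hx⟩
  · rintro ⟨h1, h2⟩
    refine ⟨h1, fun hj => ?_⟩
    cases hxx : x ⟨j, hj⟩ with
    | false => rfl
    | true => exact absurd ⟨hj, hxx⟩ h2

lemma n_le_extLen (x : Fin n → Bool) : n ≤ extLen x := le_max_left _ _

lemma onesUpTo_eq (x : Fin n → Bool) (j : ℕ) :
    onesUpTo x j = ((Finset.range j).filter fun m => upAt x m).card := by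
  have himg : ((Finset.range j).filter fun m => upAt x m)
      = (Finset.univ.filter fun i : Fin n => i.val < j ∧ x i = true).image Fin.val := by
    ext m
    simp only [Finset.mem_filter, Finset.mem_range, Finset.mem_image, Finset.mem_univ,
      true_and]
    constructor
    · rintro ⟨hmj, hmn, hx⟩
      exact ⟨⟨m, hmn⟩, ⟨hmj, hx⟩, rfl⟩
    · rintro ⟨i, ⟨hij, hxi⟩, rfl⟩
      exact ⟨hij, i.isLt, by simpa using hxi⟩
  rw [onesUpTo, himg, Finset.card_image_of_injective _ Fin.val_injective]

lemma onesUpTo_succ (x : Fin n → Bool) (j : ℕ) :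
    onesUpTo x (j + 1) = onesUpTo x j + if upAt x j then 1 else 0 := by
  rw [onesUpTo_eq, onesUpTo_eq, Finset.range_add_one, Finset.filter_insert]
  by_cases h : upAt x j
  · rw [if_pos h, if_pos h, Finset.card_insert_of_notMem (by simp)]
  · rw [if_neg h, if_neg h, add_zero]

lemma hgt_zero (x : Fin n → Bool) : hgt x 0 = 0 := by
  have : onesUpTo x 0 = 0 := by rw [onesUpTo_eq]; simp
  simp [hgt, this]

lemma hgt_succ (x : Fin n → Bool) (j : ℕ) :
    hgt x (j + 1) = hgt x j + if upAt x j then 1 else -1 := by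
  unfold hgt
  rw [onesUpTo_succ]
  by_cases h : upAt x j <;> simp [h] <;> push_cast <;> ring

lemma onesUpTo_of_ge (x : Fin n → Bool) {j : ℕ} (hj : n ≤ j) : onesUpTo x j = wt x := by
  unfold onesUpTo wt
  apply congrArg Finset.card
  apply Finset.filter_congr
  intro t _
  simp [lt_of_lt_of_le t.isLt hj]

lemma hgt_of_ge (x : Fin n → Bool) {j : ℕ} (hj : n ≤ j) :
    hgt x j = 2 * (wt x : ℤ) - (j : ℤ) := by
  rw [hgt, onesUpTo_of_ge x hj]

lemma card_up_range (x : Fin n → Bool) {m : ℕ} (hm : n ≤ m) :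
    ((Finset.range m).filter fun j => upAt x j).card = wt x := by
  rw [← onesUpTo_eq, onesUpTo_of_ge x hm]

/-- The finset of down-steps of `x^↑`. -/
noncomputable def downs (x : Fin n → Bool) : Finset ℕ :=
  (Finset.range (extLen x)).filter fun j => isDownStep x j

lemma mem_downs {x : Fin n → Bool} {j : ℕ} : j ∈ downs x ↔ isDownStep x j := by
  unfold downs
  simp only [Finset.mem_filter, Finset.mem_range, and_iff_right_iff_imp]
  exact fun h => h.1

lemma card_downs (x : Fin n → Bool) : (downs x).card = extLen x - wt x := by
  have h1 : downs x = (Finset.range (extLen x)).filter fun j => ¬ upAt x j := by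
    unfold downs
    apply Finset.filter_congr
    intro j hj
    rw [Finset.mem_range] at hj
    rw [isDownStep_iff]
    tauto
  have h2 : ((Finset.range (extLen x)).filter fun j => upAt x j).card = wt x :=
    card_up_range x (n_le_extLen x)
  rw [h1, Finset.filter_not, Finset.card_sdiff_of_subset (Finset.filter_subset _ _), Finset.card_range, h2]

/-- Telescoping count: over `[a, b)`, the number of up-steps starting at height `≥ c`
minus the number of down-steps starting at height `≥ c+1` equals the difference of
the potentials `max (h · - c) 0`. -/
lemma telescope (h : ℕ → ℤ) (up : ℕ → Prop)
    (hs : ∀ j, h (j + 1) = h j + if up j then 1 else -1) (c : ℤ) (a : ℕ) :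
    ∀ b, a ≤ b →
      ((((Finset.Ico a b).filter fun j => up j ∧ c ≤ h j).card : ℤ)
        - (((Finset.Ico a b).filter fun j => ¬ up j ∧ c + 1 ≤ h j).card : ℤ))
      = max (h b - c) 0 - max (h a - c) 0 := by
  intro b hb
  induction b, hb using Nat.le_induction with
  | base => simp
  | succ b hb ih =>
    rw [Nat.Ico_succ_right_eq_insert_Ico hb, Finset.filter_insert, Finset.filter_insert]
    have hsb := hs b
    by_cases hub : up b
    · rw [if_pos hub] at hsb
      by_cases hcb : c ≤ h b
      · rw [if_pos ⟨hub, hcb⟩, if_neg (show ¬(¬up b ∧ c + 1 ≤ h b) from fun hh => hh.1 hub),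
          Finset.card_insert_of_notMem (by simp)]
        push_cast
        omega
      · rw [if_neg (show ¬(up b ∧ c ≤ h b) from fun hh => hcb hh.2),
          if_neg (show ¬(¬up b ∧ c + 1 ≤ h b) from fun hh => hh.1 hub)]
        omega
    · rw [if_neg hub] at hsb
      by_cases hcb : c + 1 ≤ h b
      · rw [if_neg (show ¬(up b ∧ c ≤ h b) from fun hh => hub hh.1), if_pos ⟨hub, hcb⟩,
          Finset.card_insert_of_notMem (by simp)]
        push_cast
        omega
      · rw [if_neg (show ¬(up b ∧ c ≤ h b) from fun hh => hub hh.1),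
          if_neg (show ¬(¬up b ∧ c + 1 ≤ h b) from fun hh => hcb hh.2)]
        omega

lemma exists_corank {α : Type*} [LinearOrder α] :
    ∀ (i : ℕ) (S : Finset α), i < S.card → ∃ d ∈ S, (S.filter fun j => d < j).card = i := by
  intro i
  induction i with
  | zero =>
    intro S hS
    have hne : S.Nonempty := Finset.card_pos.mp hS
    refine ⟨S.max' hne, S.max'_mem hne, ?_⟩
    rw [Finset.card_eq_zero, Finset.filter_eq_empty_iff]
    exact fun a ha => not_lt.mpr (S.le_max' _ ha)
  | succ i ih =>
    intro S hS
    have hne : S.Nonempty := Finset.card_pos.mp (by omega)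
    set m := S.max' hne with hm
    have h1 : i < (S.erase m).card := by
      rw [Finset.card_erase_of_mem (S.max'_mem hne)]; omega
    obtain ⟨d, hd, hcard⟩ := ih (S.erase m) h1
    have hdS : d ∈ S := Finset.mem_of_mem_erase hd
    have hdm : d < m := lt_of_le_of_ne (S.le_max' d hdS) (Finset.ne_of_mem_erase hd)
    refine ⟨d, hdS, ?_⟩
    have hins : S.filter (fun j => d < j) = insert m ((S.erase m).filter fun j => d < j) := by
      ext a
      simp only [Finset.mem_filter, Finset.mem_insert, Finset.mem_erase]
      constructor
      · rintro ⟨haS, hda⟩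
        by_cases ham : a = m
        · exact Or.inl ham
        · exact Or.inr ⟨⟨ham, haS⟩, hda⟩
      · rintro (rfl | ⟨⟨_, haS⟩, hda⟩)
        · exact ⟨S.max'_mem hne, hdm⟩
        · exact ⟨haS, hda⟩
    rw [hins, Finset.card_insert_of_notMem (by simp), hcard]

lemma exists_corank_key {α : Type*} [LinearOrder α] (S : Finset ℕ) (κ : ℕ → α)
    (hκ : Function.Injective κ) (i : ℕ) (hi : i < S.card) :
    ∃ d ∈ S, (S.filter fun j => κ d < κ j).card = i := by
  obtain ⟨d', hd', hc⟩ := exists_corank i (S.image κ)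
    (by rwa [Finset.card_image_of_injective _ hκ])
  obtain ⟨d, hd, rfl⟩ := Finset.mem_image.mp hd'
  refine ⟨d, hd, ?_⟩
  rw [Finset.filter_image, Finset.card_image_of_injective _ hκ] at hc
  exact hc

end LexAux
section LexMain

open Finset
open scoped Classical

lemma lexUp_exists_up {n k i : ℕ} (x : Fin n → Bool) (hw : wt x = k)
    (h2k : 2 * k + 1 ≤ n) (hik : i < n - k) : ∃ y, lexUp n k i x y := by
  have hE : extLen x = n := by unfold extLen; rw [hw]; exact max_eq_left (by omega)
  have hD : (downs x).card = n - k := by rw [card_downs, hE, hw]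
  have hκ : Function.Injective (fun j : ℕ => toLex (hgt x j, (j : ℤ))) := by
    intro a b hab
    have h2 : ((a : ℤ)) = (b : ℤ) := congrArg (fun p => (ofLex p).2) hab
    omega
  obtain ⟨d, hdD, hc⟩ := exists_corank_key (downs x) _ hκ i (by omega)
  have hds : isDownStep x d := mem_downs.mp hdD
  have hdn : d < n := hE ▸ hds.1
  refine ⟨_, hw, d, hdn, hds, ?_, rfl⟩
  have hset : {j : ℕ | isDownStep x j ∧ (hgt x d < hgt x j ∨ (hgt x j = hgt x d ∧ d < j))}
      = ↑((downs x).filter fun j =>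
          (fun j : ℕ => toLex (hgt x j, (j : ℤ))) d < (fun j : ℕ => toLex (hgt x j, (j : ℤ))) j) := by
    ext j
    simp only [Set.mem_setOf_eq, Finset.coe_filter, Set.mem_setOf_eq, mem_downs,
      Prod.Lex.lt_iff, ofLex_toLex]
    constructor
    · rintro ⟨h1, h2⟩
      refine ⟨h1, ?_⟩
      rcases h2 with h2 | ⟨h2, h3⟩
      · exact Or.inl h2
      · exact Or.inr ⟨h2.symm, by exact_mod_cast h3⟩
    · rintro ⟨h1, h2⟩
      refine ⟨h1, ?_⟩
      rcases h2 with h2 | ⟨h2, h3⟩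
      · exact Or.inl h2
      · exact Or.inr ⟨h2.symm, by exact_mod_cast h3⟩
  rw [hset, Set.ncard_coe_finset, hc]

lemma lexUp_exists_down {n k i : ℕ} (y : Fin n → Bool) (hw : wt y = k + 1)
    (h2k : n ≤ 2 * k + 1) (hik : i ≤ k) : ∃ x, lexUp n k i x y := by
  set U := (Finset.range n).filter (fun j => upAt y j) with hUdef
  have hU : U.card = k + 1 := by rw [hUdef, card_up_range y le_rfl, hw]
  have hμ : Function.Injective (fun j : ℕ => toLex (hgt y j, -(j : ℤ))) := by
    intro a b hab
    have h2 : (-(a : ℤ)) = -(b : ℤ) := congrArg (fun p => (ofLex p).2) hab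
    omega
  obtain ⟨d, hdU, hcU⟩ := exists_corank_key U _ hμ i (by omega)
  rw [hUdef, Finset.mem_filter, Finset.mem_range] at hdU
  obtain ⟨hdn, hdn', hyd⟩ := hdU
  set x : Fin n → Bool := fun t => if t.val = d then false else y t with hxdef
  have hxy : ∀ t : Fin n, t.val ≠ d → x t = y t := fun t ht => if_neg ht
  have hxd : ∀ h : d < n, x ⟨d, h⟩ = false := fun h => if_pos rfl
  have hwx : wt x = k := by
    have hmem : (⟨d, hdn⟩ : Fin n) ∈ Finset.univ.filter (fun t => y t = true) := by
      simp only [Finset.mem_filter, Finset.mem_univ, true_and]; exact hyd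
    have hers : (Finset.univ.filter fun t => x t = true)
        = (Finset.univ.filter fun t => y t = true).erase ⟨d, hdn⟩ := by
      ext t
      simp only [Finset.mem_filter, Finset.mem_erase, Finset.mem_univ, true_and]
      constructor
      · intro hxt
        have htd : t.val ≠ d := by
          intro h
          rw [hxdef] at hxt; simp [h] at hxt
        exact ⟨fun h => htd (by rw [h]), by rw [← hxy t htd]; exact hxt⟩
      · rintro ⟨h1, h2⟩
        have htd : t.val ≠ d := fun h => h1 (Fin.ext h)
        rw [hxy t htd]; exact h2
    unfold wt
    unfold wt at hw
    rw [hers, Finset.card_erase_of_mem hmem, hw]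
    omega
  have hupx : ∀ j, upAt x j ↔ (upAt y j ∧ j ≠ d) := by
    intro j
    constructor
    · rintro ⟨hj, hxj⟩
      by_cases hjd : j = d
      · rw [hxdef] at hxj; simp [hjd] at hxj
      · exact ⟨⟨hj, by rw [← hxy ⟨j, hj⟩ hjd]; exact hxj⟩, hjd⟩
    · rintro ⟨⟨hj, hyj⟩, hjd⟩
      exact ⟨hj, by rw [hxy ⟨j, hj⟩ hjd]; exact hyj⟩
  have hones_le : ∀ j, j ≤ d → onesUpTo x j = onesUpTo y j := by
    intro j hj
    unfold onesUpTo
    apply congrArg Finset.card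
    apply Finset.filter_congr
    intro t _
    constructor
    · rintro ⟨h1, h2⟩; exact ⟨h1, by rw [← hxy t (by omega)]; exact h2⟩
    · rintro ⟨h1, h2⟩; exact ⟨h1, by rw [hxy t (by omega)]; exact h2⟩
  have hhle : ∀ j, j ≤ d → hgt x j = hgt y j := by
    intro j hj; unfold hgt; rw [hones_le j hj]
  have hones_gt : ∀ j, d < j → onesUpTo x j + 1 = onesUpTo y j := by
    intro j hj
    unfold onesUpTo
    have hmem : (⟨d, hdn⟩ : Fin n)
        ∈ Finset.univ.filter (fun t : Fin n => t.val < j ∧ y t = true) := by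
      simp only [Finset.mem_filter, Finset.mem_univ, true_and]
      exact ⟨hj, hyd⟩
    have hers : (Finset.univ.filter fun t : Fin n => t.val < j ∧ x t = true)
        = (Finset.univ.filter fun t : Fin n => t.val < j ∧ y t = true).erase ⟨d, hdn⟩ := by
      ext t
      simp only [Finset.mem_filter, Finset.mem_erase, Finset.mem_univ, true_and]
      constructor
      · rintro ⟨h1, h2⟩
        have htd : t.val ≠ d := by
          intro h; rw [hxdef] at h2; simp [h] at h2
        exact ⟨fun h => htd (by rw [h]), h1, by rw [← hxy t htd]; exact h2⟩
      · rintro ⟨h1, h2, h3⟩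
        have htd : t.val ≠ d := fun h => h1 (Fin.ext h)
        exact ⟨h2, by rw [hxy t htd]; exact h3⟩
    have hpos : 0 < (Finset.univ.filter fun t : Fin n => t.val < j ∧ y t = true).card :=
      Finset.card_pos.mpr ⟨_, hmem⟩
    rw [hers, Finset.card_erase_of_mem hmem]
    omega
  have hhgt2 : ∀ j, d < j → hgt x j = hgt y j - 2 := by
    intro j hj
    have h3 := hones_gt j hj
    unfold hgt
    omega
  have hEx : extLen x = 2 * k + 1 := by
    unfold extLen; rw [hwx]; exact max_eq_right (by omega)
  set L := 2 * k + 1 with hLdef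
  set c := hgt x d with hcdef
  have hcy : c = hgt y d := by rw [hcdef, hhle d le_rfl]
  have hupxd : ¬ upAt x d := by rw [hupx]; tauto
  have hcd1 : hgt x (d + 1) = c - 1 := by rw [hgt_succ, if_neg hupxd, ← hcdef]; ring
  have hcL : hgt x L = -1 := by
    rw [hgt_of_ge x (by omega), hwx]; omega
  clear_value x L c
  have t1 := telescope (hgt x) (upAt x) (hgt_succ x) c 0 d (Nat.zero_le d)
  have t2 := telescope (hgt x) (upAt x) (hgt_succ x) (c - 1) (d + 1) L (by omega)
  rw [hgt_zero, ← hcdef] at t1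
  rw [hcL, hcd1] at t2
  have hdisj1 : Disjoint ((Finset.Ico 0 d).filter fun j => ¬ upAt x j ∧ c + 1 ≤ hgt x j)
      ((Finset.Ico (d + 1) L).filter fun j => ¬ upAt x j ∧ c - 1 + 1 ≤ hgt x j) := by
    rw [Finset.disjoint_left]
    intro a ha hb
    simp only [Finset.mem_filter, Finset.mem_Ico] at ha hb
    omega
  have hdisj2 : Disjoint ((Finset.Ico 0 d).filter fun j => upAt x j ∧ c ≤ hgt x j)
      ((Finset.Ico (d + 1) L).filter fun j => upAt x j ∧ c - 1 ≤ hgt x j) := by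
    rw [Finset.disjoint_left]
    intro a ha hb
    simp only [Finset.mem_filter, Finset.mem_Ico] at ha hb
    omega
  have hDs : ((Finset.range L).filter fun j => isDownStep x j ∧
        (c < hgt x j ∨ (hgt x j = c ∧ d < j)))
      = ((Finset.Ico 0 d).filter fun j => ¬ upAt x j ∧ c + 1 ≤ hgt x j)
        ∪ ((Finset.Ico (d + 1) L).filter fun j => ¬ upAt x j ∧ c - 1 + 1 ≤ hgt x j) := by
    ext j
    simp only [Finset.mem_filter, Finset.mem_union, Finset.mem_range, Finset.mem_Ico,
      isDownStep_iff, hEx]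
    by_cases hu : upAt x j
    · simp [hu]
    · simp only [hu, not_false_iff, and_true, true_and]
      by_cases hjd : j = d
      · subst hjd
        omega
      · omega
  have hUs : ((Finset.Ico 0 d).filter fun j => upAt x j ∧ c ≤ hgt x j)
        ∪ ((Finset.Ico (d + 1) L).filter fun j => upAt x j ∧ c - 1 ≤ hgt x j)
      = U.filter fun j =>
          (fun j : ℕ => toLex (hgt y j, -(j : ℤ))) d < (fun j : ℕ => toLex (hgt y j, -(j : ℤ))) j := by
    ext j
    simp only [Finset.mem_filter, Finset.mem_union, Finset.mem_Ico, hUdef, Finset.mem_range,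
      Prod.Lex.lt_iff, ofLex_toLex, hupx]
    by_cases hu : upAt y j
    · have hjn : j < n := by obtain ⟨h, -⟩ := hu; exact h
      simp only [hu, hjn, true_and, and_true, ne_eq]
      rcases lt_trichotomy j d with hj | hj | hj
      · have e1 : hgt x j = hgt y j := hhle j (le_of_lt hj)
        omega
      · subst hj
        omega
      · have e1 : hgt x j = hgt y j - 2 := hhgt2 j hj
        omega
    · simp [hu]
  refine ⟨x, hwx, d, hdn, ⟨by rw [hEx]; omega, hxd⟩, ?_, ?_⟩
  · have hset : {j : ℕ | isDownStep x j ∧ (hgt x d < hgt x j ∨ (hgt x j = hgt x d ∧ d < j))}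
        = ↑((Finset.range L).filter fun j => isDownStep x j ∧
            (c < hgt x j ∨ (hgt x j = c ∧ d < j))) := by
      ext j
      simp only [Set.mem_setOf_eq, Finset.coe_filter, Set.mem_setOf_eq, Finset.mem_range,
        ← hcdef]
      constructor
      · rintro ⟨h1, h2⟩
        have h4 := h1.1
        rw [hEx] at h4
        exact ⟨h4, h1, h2⟩
      · rintro ⟨-, h1, h2⟩
        exact ⟨h1, h2⟩
    rw [hset, Set.ncard_coe_finset]
    have hcard2 : (((Finset.Ico 0 d).filter fun j => upAt x j ∧ c ≤ hgt x j).card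
        + ((Finset.Ico (d + 1) L).filter fun j => upAt x j ∧ c - 1 ≤ hgt x j).card) = i := by
      rw [← Finset.card_union_of_disjoint hdisj2, hUs, hcU]
    rw [hDs, Finset.card_union_of_disjoint hdisj1]
    omega
  · funext t
    by_cases ht : t.val = d
    · simp only [ht, if_pos rfl]
      have het : t = ⟨d, hdn⟩ := Fin.ext ht
      rw [het]
      exact hyd
    · rw [if_neg ht, hxy t ht]

end LexMain

/-- For `0 ≤ k ≤ n−1` and `0 ≤ i ≤ l := max{k, n−k−1}`, the `i`-lexical matching `M^i_{n,k}`
saturates all vertices in the smaller of the two levels `k` and `k+1` of the `n`-cube. -/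
theorem lexical_matching_saturates (n k i : ℕ) (hn : 1 ≤ n) (hk : k ≤ n - 1)
    (hi : i ≤ max k (n - k - 1)) :
    ((n.choose k ≤ n.choose (k + 1)) →
      ∀ x : Fin n → Bool, wt x = k → ∃ y, lexUp n k i x y) ∧
    ((n.choose (k + 1) ≤ n.choose k) →
      ∀ y : Fin n → Bool, wt y = k + 1 → ∃ x, lexUp n k i x y) := by
  have hkn : k < n := by omega
  have hid := Nat.choose_succ_right_eq n k
  have hp : 0 < n.choose k := Nat.choose_pos (le_of_lt hkn)
  constructor
  · intro hc x hx
    have h1 : k + 1 ≤ n - k := by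
      by_contra hcon
      push_neg at hcon
      have h2 : n.choose k * (k + 1) ≤ n.choose k * (n - k) := by
        calc n.choose k * (k + 1) ≤ n.choose (k + 1) * (k + 1) :=
              Nat.mul_le_mul_right _ hc
          _ = n.choose k * (n - k) := hid
      have h3 := Nat.le_of_mul_le_mul_left h2 hp
      omega
    exact lexUp_exists_up x hx (by omega) (by omega)
  · intro hc y hy
    have h1 : n - k ≤ k + 1 := by
      by_contra hcon
      push_neg at hcon
      have h2 : n.choose k * (n - k) ≤ n.choose k * (k + 1) := by
        calc n.choose k * (n - k) = n.choose (k + 1) * (k + 1) := hid.symm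
          _ ≤ n.choose k * (k + 1) := Nat.mul_le_mul_right _ hc
      have h3 := Nat.le_of_mul_le_mul_left h2 hp
      omega
    exact lexUp_exists_down y hy (by omega) (by omega)
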